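/- Let λ < κ be uncountable ordinals. The map π : K_κ → K_λ given by π(T_q, f_q) = (T_q, f_q ↾ λ) is a projection: it is order-preserving, maps the maximal element to the maximal element, and for every q ∈ K_κ and every r ∈ K_λ with r ≤ π(q), there exists r' ≤ q in K_κ with π(r') ≤ r. -/

import Mathlib

noncomputable section

universe u

open Cardinal Ordinal Set

/-- `ω₁` as an ordinal. -/
noncomputable def omegaOne : Ordinal.{u} := (Cardinal.aleph 1).ord

/-- A node of `^{<ω₁}ω₁`: a function from a countable ordinal (its length) into `ω₁`,
coded canonically (value `0` beyond the length). -/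
structure KNode : Type (u + 1) where
  len : Ordinal.{u}
  len_lt : len < omegaOne
  val : Ordinal.{u} → Ordinal.{u}
  val_lt : ∀ o, val o < omegaOne
  val_eq_zero : ∀ o, ¬ o < len → val o = 0

namespace KNode

/-- The extension (end-extension) order on nodes. -/
def le (s t : KNode) : Prop := s.len ≤ t.len ∧ ∀ o < s.len, t.val o = s.val o

end KNode

/-- A condition of the forcing `K_λ`: a pair `(T, f)` where `T` is a normal, infinitely
splitting subtree of `^{<η+1}ω₁` of size at most `ω₁`, and `f` is a countable partial
function from `λ` to the top level `T ∩ ^{η}ω₁`. -/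
structure KCond (lam : Ordinal.{u}) : Type (u + 1) where
  η : Ordinal.{u}
  η_lt : η < omegaOne
  T : Set KNode.{u}
  T_le : ∀ s ∈ T, s.len ≤ η
  /-- `T` is a subtree: closed under restrictions (initial segments). -/
  T_closed : ∀ s ∈ T, ∀ u : KNode, u.le s → u ∈ T
  /-- `T` has size at most `ω₁`. -/
  T_card : Cardinal.mk T ≤ Cardinal.aleph 1
  /-- `T` is normal: every node extends to every higher level `≤ η`. -/
  T_normal : ∀ s ∈ T, ∀ β : Ordinal.{u}, s.len ≤ β → β ≤ η → ∃ t ∈ T, s.le t ∧ t.len = β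
  /-- `T` is infinitely splitting. -/
  T_splitting : ∀ s ∈ T, s.len < η → {t ∈ T | s.le t ∧ t.len = s.len + 1}.Infinite
  f : Ordinal.{u} → Option KNode.{u}
  f_dom : {a : Ordinal.{u} | f a ≠ none}.Countable
  f_spec : ∀ a n, f a = some n → a < lam ∧ n ∈ T ∧ n.len = η

namespace KCond

/-- The order on `K_λ`. -/
def le {lam : Ordinal.{u}} (q₁ q₀ : KCond lam) : Prop :=
  q₀.η ≤ q₁.η ∧
  {s ∈ q₁.T | s.len ≤ q₀.η} = q₀.T ∧
  (∀ a : Ordinal.{u}, q₀.f a ≠ none → q₁.f a ≠ none) ∧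
  (∀ a n, q₀.f a = some n → ∃ m, q₁.f a = some m ∧ n.le m)

end KCond

/-- The order on `K_λ` with the maximal element `1 = (∅, ∅)` adjoined (coded by `none`). -/
def KOptLe {lam : Ordinal.{u}} : Option (KCond.{u} lam) → Option (KCond.{u} lam) → Prop
  | _, none => True
  | none, some _ => False
  | some a, some b => KCond.le a b

/-- The restriction map `π(T_q, f_q) = (T_q, f_q ↾ λ)` from `K_κ` to `K_λ`. -/
def KCond.proj {kap : Ordinal.{u}} (lam : Ordinal.{u}) (q : KCond.{u} kap) :
    KCond.{u} lam where
  η := q.η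
  η_lt := q.η_lt
  T := q.T
  T_le := q.T_le
  T_closed := q.T_closed
  T_card := q.T_card
  T_normal := q.T_normal
  T_splitting := q.T_splitting
  f := fun a => if a < lam then q.f a else none
  f_dom := by
    refine q.f_dom.mono ?_
    intro a ha
    simp only [Set.mem_setOf_eq] at ha ⊢
    by_cases h : a < lam
    · rw [if_pos h] at ha; exact ha
    · exact absurd (if_neg h) ha
  f_spec := by
    intro a n h
    try simp only at h
    by_cases ha : a < lam
    · rw [if_pos ha] at h
      exact ⟨ha, (q.f_spec a n h).2.1, (q.f_spec a n h).2.2⟩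
    · rw [if_neg ha] at h; exact absurd h (by simp)

/-- The restriction map extended to the forcings with the maximal element adjoined. -/
def KOptProj {kap : Ordinal.{u}} (lam : Ordinal.{u}) :
    Option (KCond.{u} kap) → Option (KCond.{u} lam) :=
  Option.map (KCond.proj lam)

namespace KNode

theorem le_refl (s : KNode.{u}) : s.le s := ⟨_root_.le_refl _, fun _ _ => rfl⟩

end KNode

namespace KCond

theorem le_refl' {lam : Ordinal.{u}} (q : KCond lam) : q.le q := by
  refine ⟨_root_.le_refl _, ?_, fun a h => h, fun a n h => ⟨n, h, KNode.le_refl n⟩⟩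
  ext s
  simp only [Set.mem_setOf_eq, Set.mem_sep_iff]
  exact ⟨fun h => h.1, fun h => ⟨h, q.T_le s h⟩⟩

/-- Lifting a condition to a larger λ. -/
def lift {lam kap : Ordinal.{u}} (h : lam ≤ kap) (r : KCond.{u} lam) : KCond.{u} kap :=
  { r with f_spec := fun a n hh =>
      ⟨lt_of_lt_of_le (r.f_spec a n hh).1 h, (r.f_spec a n hh).2⟩ }

open Classical in
/-- The mix of `q ∈ K_κ` and `r ≤ π(q)` in `K_λ`. -/
def mix {lam kap : Ordinal.{u}} (hlk : lam ≤ kap) (q : KCond.{u} kap) (r : KCond.{u} lam)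
    (h : r.le (q.proj lam)) : KCond.{u} kap where
  η := r.η
  η_lt := r.η_lt
  T := r.T
  T_le := r.T_le
  T_closed := r.T_closed
  T_card := r.T_card
  T_normal := r.T_normal
  T_splitting := r.T_splitting
  f := fun a => if a < lam then r.f a else
    (q.f a).bind (fun n => if hn : n ∈ r.T ∧ n.len ≤ r.η then
      some (Classical.choose (r.T_normal n hn.1 r.η hn.2 (_root_.le_refl _))) else none)
  f_dom := by
    refine (r.f_dom.union q.f_dom).mono ?_
    intro a ha
    simp only [Set.mem_setOf_eq, Set.mem_union] at ha ⊢
    by_cases hal : a < lam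
    · rw [if_pos hal] at ha; exact Or.inl ha
    · rw [if_neg hal] at ha
      refine Or.inr fun hq => ha ?_
      rw [hq]; rfl
  f_spec := by
    intro a n hf
    by_cases hal : a < lam
    · rw [if_pos hal] at hf
      obtain ⟨_, h2, h3⟩ := r.f_spec a n hf
      exact ⟨lt_of_lt_of_le hal hlk, h2, h3⟩
    · rw [if_neg hal] at hf
      cases hq : q.f a with
      | none => rw [hq] at hf; exact absurd hf (by simp)
      | some m =>
        rw [hq] at hf
        simp only [Option.bind_some] at hf
        by_cases hm : m ∈ r.T ∧ m.len ≤ r.η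
        · rw [dif_pos hm] at hf
          obtain ⟨rfl⟩ : n = _ := (Option.some_injective _ hf).symm
          obtain ⟨ht, _, hlen⟩ := Classical.choose_spec (r.T_normal m hm.1 r.η hm.2 (_root_.le_refl _))
          exact ⟨(q.f_spec a m hq).1, ht, hlen⟩
        · rw [dif_neg hm] at hf; exact absurd hf (by simp)

theorem mix_le_left {lam kap : Ordinal.{u}} (hlk : lam ≤ kap) (q : KCond.{u} kap)
    (r : KCond.{u} lam) (h : r.le (q.proj lam)) : (mix hlk q r h).le q := by
  obtain ⟨h1, h2, h3, h4⟩ := h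
  refine ⟨h1, h2, ?_, ?_⟩
  · intro a hq
    show (if a < lam then r.f a else _) ≠ none
    by_cases hal : a < lam
    · rw [if_pos hal]
      have := h3 a (by show (if a < lam then q.f a else none) ≠ none; rw [if_pos hal]; exact hq)
      exact this
    · rw [if_neg hal]
      cases hqa : q.f a with
      | none => exact absurd hqa hq
      | some m =>
        obtain ⟨_, hmT, hmlen⟩ := q.f_spec a m hqa
        have hmem : m ∈ r.T ∧ m.len ≤ r.η := by
          have : m ∈ {s ∈ r.T | s.len ≤ (q.proj lam).η} := h2 ▸ hmT
          exact ⟨this.1, le_trans this.2 h1⟩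
        simp only [Option.bind_some, dif_pos hmem]
        exact Option.some_ne_none _
  · intro a n hq
    show ∃ m, (if a < lam then r.f a else _) = some m ∧ n.le m
    by_cases hal : a < lam
    · rw [if_pos hal]
      exact h4 a n (by show (if a < lam then q.f a else none) = some n; rw [if_pos hal]; exact hq)
    · rw [if_neg hal, hq]
      obtain ⟨_, hmT, hmlen⟩ := q.f_spec a n hq
      have hmem : n ∈ r.T ∧ n.len ≤ r.η := by
        have : n ∈ {s ∈ r.T | s.len ≤ (q.proj lam).η} := h2 ▸ hmT
        exact ⟨this.1, le_trans this.2 h1⟩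
      simp only [Option.bind_some, dif_pos hmem]
      obtain ⟨_, hle, _⟩ := Classical.choose_spec (r.T_normal n hmem.1 r.η hmem.2 (_root_.le_refl _))
      exact ⟨_, rfl, hle⟩

theorem proj_mix_le {lam kap : Ordinal.{u}} (hlk : lam ≤ kap) (q : KCond.{u} kap)
    (r : KCond.{u} lam) (h : r.le (q.proj lam)) : ((mix hlk q r h).proj lam).le r := by
  refine ⟨_root_.le_refl _, ?_, ?_, ?_⟩
  · ext s
    simp only [Set.mem_sep_iff]
    exact ⟨fun hh => hh.1, fun hh => ⟨hh, r.T_le s hh⟩⟩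
  · intro a hr
    cases hra : r.f a with
    | none => exact absurd hra hr
    | some n =>
      have hal : a < lam := (r.f_spec a n hra).1
      show (if a < lam then (if a < lam then r.f a else _) else none) ≠ none
      rw [if_pos hal, if_pos hal, hra]
      exact Option.some_ne_none _
  · intro a n hra
    have hal : a < lam := (r.f_spec a n hra).1
    refine ⟨n, ?_, KNode.le_refl n⟩
    show (if a < lam then (if a < lam then r.f a else _) else none) = some n
    rw [if_pos hal, if_pos hal, hra]

theorem proj_lift_le {lam kap : Ordinal.{u}} (hlk : lam ≤ kap) (r : KCond.{u} lam) :
    ((lift hlk r).proj lam).le r := by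
  refine ⟨_root_.le_refl _, ?_, ?_, ?_⟩
  · ext s
    simp only [Set.mem_sep_iff]
    exact ⟨fun hh => hh.1, fun hh => ⟨hh, r.T_le s hh⟩⟩
  · intro a hr
    cases hra : r.f a with
    | none => exact absurd hra hr
    | some n =>
      have hal : a < lam := (r.f_spec a n hra).1
      show (if a < lam then r.f a else none) ≠ none
      rw [if_pos hal, hra]
      exact Option.some_ne_none _
  · intro a n hra
    have hal : a < lam := (r.f_spec a n hra).1
    refine ⟨n, ?_, KNode.le_refl n⟩
    show (if a < lam then r.f a else none) = some n
    rw [if_pos hal, hra]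

theorem proj_mono {lam kap : Ordinal.{u}} {a b : KCond.{u} kap} (h : a.le b) :
    (a.proj lam).le (b.proj lam) := by
  obtain ⟨h1, h2, h3, h4⟩ := h
  refine ⟨h1, h2, ?_, ?_⟩
  · intro x hx
    show (if x < lam then a.f x else none) ≠ none
    by_cases hxl : x < lam
    · rw [if_pos hxl]
      refine h3 x fun hc => hx ?_
      show (if x < lam then b.f x else none) = none
      rw [if_pos hxl, hc]
    · exact absurd (if_neg hxl) hx
  · intro x n hx
    by_cases hxl : x < lam
    · rw [show (b.proj lam).f x = b.f x from if_pos hxl] at hx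
      obtain ⟨m, hm, hnm⟩ := h4 x n hx
      exact ⟨m, by show (if x < lam then a.f x else none) = some m; rw [if_pos hxl]; exact hm, hnm⟩
    · rw [show (b.proj lam).f x = none from if_neg hxl] at hx
      exact absurd hx (by simp)

end KCond

/-- For uncountable ordinals `λ < κ`, the map `π(T_q, f_q) = (T_q, f_q ↾ λ)`
is a projection from `K_κ` to `K_λ`: it is order-preserving, maps the maximal element to
the maximal element, and for every `q ∈ K_κ` and `r ∈ K_λ` with `r ≤ π(q)` there exists
`r' ≤ q` with `π(r') ≤ r`. -/
theorem KCond.proj_is_projection (lam kap : Ordinal.{u})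
    (hlam : omegaOne ≤ lam) (hlk : lam < kap) :
    (∀ a b : Option (KCond.{u} kap), KOptLe a b → KOptLe (KOptProj lam a) (KOptProj lam b)) ∧
    (KOptProj lam (none : Option (KCond.{u} kap)) = none) ∧
    (∀ (q : Option (KCond.{u} kap)) (r : Option (KCond.{u} lam)),
      KOptLe r (KOptProj lam q) →
        ∃ r' : Option (KCond.{u} kap), KOptLe r' q ∧ KOptLe (KOptProj lam r') r) := by

  refine ⟨?_, rfl, ?_⟩
  · intro a b h
    cases a with
    | none => cases b with
      | none => trivial
      | some bb => exact absurd h (by simp [KOptLe])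
    | some aa => cases b with
      | none => trivial
      | some bb => exact KCond.proj_mono h
  · intro q r hr
    cases r with
    | none =>
      refine ⟨q, ?_, ?_⟩
      · cases q with
        | none => trivial
        | some qq => exact KCond.le_refl' qq
      · cases q with
        | none => trivial
        | some qq => trivial
    | some rr =>
      cases q with
      | none =>
        exact ⟨some (KCond.lift hlk.le rr), trivial, KCond.proj_lift_le hlk.le rr⟩
      | some qq =>
        have hr' : rr.le (qq.proj lam) := hr
        exact ⟨some (KCond.mix hlk.le qq rr hr'), KCond.mix_le_left hlk.le qq rr hr',
          KCond.proj_mix_le hlk.le qq rr hr'⟩
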